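/- With the logarithmic polynomials R_p^k defined recursively as above, one has R_p^{±(p−2)}(x) = p/2^p + (p(p−1)/2^{p−1})·x² for all p ≥ 2. -/
import Mathlib

/-- The logarithmic polynomials `R_p^k`. -/
noncomputable def logPoly : ℕ → ℤ → ℝ → ℝ
  | 0, k, _ => if k = 0 then 1 else 0
  | p + 1, k, x =>
      (1 / 2) * logPoly p (k - 1) x + x * logPoly p k x + (1 / 2) * logPoly p (k + 1) x

lemma logPoly_succ (p : ℕ) (k : ℤ) (x : ℝ) : logPoly (p+1) k x =
    (1 / 2) * logPoly p (k - 1) x + x * logPoly p k x + (1 / 2) * logPoly p (k + 1) x := rfl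

lemma logPoly_zero (p : ℕ) (k : ℤ) (x : ℝ) (h : (p : ℤ) < |k|) : logPoly p k x = 0 := by
  induction p generalizing k with
  | zero =>
    simp only [logPoly]
    rw [if_neg]
    intro hk; simp [hk] at h
  | succ n ih =>
    rcases abs_cases k with ⟨h', _⟩ | ⟨h', _⟩ <;>
    rw [logPoly_succ,
      ih (k-1) (by rcases abs_cases (k-1) with ⟨h2,_⟩|⟨h2,_⟩ <;> omega),
      ih k (by rcases abs_cases k with ⟨h2,_⟩|⟨h2,_⟩ <;> omega),
      ih (k+1) (by rcases abs_cases (k+1) with ⟨h2,_⟩|⟨h2,_⟩ <;> omega)] <;> ring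

lemma logPoly_neg (p : ℕ) (k : ℤ) (x : ℝ) : logPoly p (-k) x = logPoly p k x := by
  induction p generalizing k with
  | zero => simp [logPoly, neg_eq_zero]
  | succ n ih =>
    rw [logPoly_succ, logPoly_succ]
    have h1 : -k - 1 = -(k+1) := by ring
    have h2 : -k + 1 = -(k-1) := by ring
    rw [h1, h2, ih, ih, ih]
    ring

lemma logPoly_top (p : ℕ) (x : ℝ) : logPoly p p x = 1 / 2 ^ p := by
  induction p with
  | zero => simp [logPoly]
  | succ n ih =>
    rw [logPoly_succ]
    push_cast
    rw [show (n:ℤ)+1-1 = (n:ℤ) by ring, ih,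
        logPoly_zero n ((n:ℤ)+1) x (by rw [abs_of_nonneg (by positivity)]; omega),
        logPoly_zero n ((n:ℤ)+1+1) x (by rw [abs_of_nonneg (by positivity)]; omega)]
    ring

lemma logPoly_top1 (p : ℕ) (x : ℝ) : logPoly (p+1) ((p:ℤ)+1-1) x = (p+1) * x / 2 ^ p := by
  induction p with
  | zero =>
    rw [logPoly_succ]
    norm_num [logPoly]
  | succ n ih =>
    rw [logPoly_succ]
    push_cast
    rw [show (n:ℤ)+1+1-1-1 = (n:ℤ)+1-1 by ring, show (n:ℤ)+1+1-1 = (n:ℤ)+1 by ring, ih]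
    have t := logPoly_top (n+1) x
    push_cast at t
    rw [t, logPoly_zero (n+1) ((n:ℤ)+1+1) x
      (by rw [abs_of_nonneg (by positivity)]; push_cast; omega)]
    ring

theorem logPoly_sub_two (p : ℕ) (hp : 2 ≤ p) (x : ℝ) :
    logPoly p ((p : ℤ) - 2) x = p / 2 ^ p + (p * (p - 1) / 2 ^ (p - 1)) * x ^ 2 ∧
    logPoly p (-((p : ℤ) - 2)) x = p / 2 ^ p + (p * (p - 1) / 2 ^ (p - 1)) * x ^ 2 := by
  have key : ∀ n : ℕ, logPoly (n+2) ((n:ℤ)+2-2) x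
      = ((n:ℝ)+2) / 2 ^ (n+2) + (((n:ℝ)+2) * ((n:ℝ)+1) / 2 ^ (n+1)) * x ^ 2 := by
    intro n
    induction n with
    | zero =>
      rw [logPoly_succ, logPoly_succ]
      norm_num [logPoly]
      ring
    | succ m ih =>
      rw [show m+1+2 = (m+2)+1 from rfl, logPoly_succ]
      push_cast
      rw [show (m:ℤ)+1+2-2-1 = (m:ℤ)+2-2 by ring, ih,
          show (m:ℤ)+1+2-2 = (m:ℤ)+1+1-1 by ring]
      have t1 := logPoly_top1 (m+1) x
      have t2 := logPoly_top (m+2) x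
      push_cast at t1 t2
      rw [t1, show (m:ℤ)+1+1-1+1 = ((m:ℤ)+2) by ring, t2]
      ring
  obtain ⟨n, rfl⟩ : ∃ n, p = n + 2 := ⟨p - 2, by omega⟩
  have h := key n
  have e : ((n+2 : ℕ) : ℝ) / 2 ^ (n+2) + (((n+2:ℕ):ℝ) * (((n+2:ℕ):ℝ) - 1) / 2 ^ (n+2-1)) * x ^ 2
      = ((n:ℝ)+2) / 2 ^ (n+2) + (((n:ℝ)+2) * ((n:ℝ)+1) / 2 ^ (n+1)) * x ^ 2 := by
    rw [show n+2-1 = n+1 from rfl]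
    push_cast
    ring_nf
  refine ⟨?_, ?_⟩
  · rw [e]; exact h
  · rw [e, logPoly_neg]; exact h
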